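/- arXiv:2506.19508 — 3 statements merged into one kernel-verified Lean document; each statement's English description precedes it below -/
import Mathlib

section
/- Let ψ : ℝ → ℝ be a C¹ function which is 1-periodic with ∫₀¹ ψ(x)dx = 0, let p and q be coprime integers with q ≥ 1, let a ∈ ℝ, and let Ψ(x) = ∑_{n∈ℤ∖{0}} c_{nq} e^{2πinqx}, where c_m are the Fourier coefficients of ψ. If min_{x∈[0,1]}(a + ψ(x)) > 0, then min_{x∈[0,1]}(a + Ψ(x)) > 0. -/
open Filter Real

section helpers
open Complex MeasureTheory AddCircle
open scoped ENNReal

private lemma MRP_sq_summable (g : C(AddCircle (1:ℝ), ℂ)) [Fact (0 < (1:ℝ))] :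
    Summable (fun n : ℤ => ‖fourierCoeff (g : AddCircle (1:ℝ) → ℂ) n‖ ^ 2) := by
  have hm := lp.memℓp (fourierBasis.repr (ContinuousMap.toLp (E := ℂ) 2 haarAddCircle ℂ g))
  rw [memℓp_gen_iff (by norm_num : 0 < (2:ℝ≥0∞).toReal)] at hm
  simp only [fourierBasis_repr, fourierCoeff_toLp] at hm
  convert hm using 2 with n
  rw [ENNReal.toReal_ofNat, ← Real.rpow_natCast]
  norm_num

private lemma MRP_coeff (f : ℝ → ℂ) (Φ : C(AddCircle (1:ℝ), ℂ))
    (hΦ : ∀ x : ℝ, Φ (x : ℝ) = f x) (m : ℤ) [Fact (0 < (1:ℝ))] :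
    fourierCoeff (Φ : AddCircle (1:ℝ) → ℂ) m
      = ∫ x in (0:ℝ)..1, f x * Complex.exp (-(2 * (π:ℂ) * Complex.I * m * x)) := by
  rw [fourierCoeff_eq_intervalIntegral _ m 0, zero_add]
  simp only [one_smul, smul_eq_mul, one_div, div_one]
  congr 1
  ext x
  rw [hΦ, fourier_coe_apply]
  push_cast
  rw [div_one, mul_comm]
  congr 2
  ring

private lemma MRP_coeffOn (f : ℝ → ℂ) (m : ℤ) :
    fourierCoeffOn (zero_lt_one) f m
      = ∫ x in (0:ℝ)..1, f x * Complex.exp (-(2 * (π:ℂ) * Complex.I * m * x)) := by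
  rw [fourierCoeffOn_eq_integral]
  simp only [sub_zero, one_smul, smul_eq_mul, one_div, div_one, one_div]
  congr 1
  ext x
  rw [fourier_coe_apply]
  push_cast
  rw [sub_zero, div_one, mul_comm]
  congr 2
  ring

private lemma MRP_lift_eval (f : ℝ → ℂ) (hperf : Function.Periodic f 1) (x : ℝ) :
    AddCircle.liftIco (1:ℝ) 0 f ((x : ℝ) : AddCircle (1:ℝ)) = f x := by
  have h0 : (((⌊x⌋ : ℝ)) : AddCircle (1:ℝ)) = 0 :=
    (QuotientAddGroup.eq_zero_iff _).2 ⟨⌊x⌋, by simp⟩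
  have h1 : ((x : ℝ) : AddCircle (1:ℝ)) = ((Int.fract x : ℝ) : AddCircle (1:ℝ)) := by
    rw [Int.fract, sub_eq_add_neg, AddCircle.coe_add, AddCircle.coe_neg, h0]
    simp
  rw [h1, AddCircle.liftIco_coe_apply (by simp [Int.fract_nonneg, Int.fract_lt_one])]
  have h2 := hperf.sub_int_mul_eq (x := x) ⌊x⌋
  rw [mul_one] at h2
  rw [Int.fract]
  exact h2

private lemma MRP_inversion (ψ : ℝ → ℝ) (hψ1 : ContDiff ℝ 1 ψ)
    (hper : Function.Periodic ψ 1) (y : ℝ) :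
    HasSum (fun m : ℤ =>
      (∫ x in (0:ℝ)..1, (ψ x : ℂ) * Complex.exp (-(2 * (π:ℂ) * Complex.I * m * x)))
        * Complex.exp (2 * (π:ℂ) * Complex.I * m * y)) ((ψ y : ℂ)) := by
  haveI : Fact (0 < (1:ℝ)) := ⟨one_pos⟩
  set f : ℝ → ℂ := fun x => (ψ x : ℂ) with hf
  have hperf : Function.Periodic f 1 := fun x => by simp [hf, hper x]
  set f' : ℝ → ℂ := fun x => ((deriv ψ x : ℝ) : ℂ) with hf'
  have hψd : ∀ x, HasDerivAt ψ (deriv ψ x) x := fun x =>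
    ((hψ1.differentiable one_ne_zero) x).hasDerivAt
  have hderper : Function.Periodic (deriv ψ) 1 := by
    intro x
    have : deriv (fun y => ψ (y + 1)) x = deriv ψ (x + 1) := by
      simpa using deriv_comp_add_const (f := ψ) (a := 1) (x := x)
    rw [← this]
    congr 1
    funext z
    exact hper z
  have hperf' : Function.Periodic f' 1 := fun x => by simp [hf', hderper x]
  have hcderiv : Continuous (deriv ψ) := (hψ1.continuous_deriv le_rfl)
  have hψc : Continuous ψ := hψ1.continuous
  have hΦc : Continuous (AddCircle.liftIco (1:ℝ) 0 f) := by
    apply AddCircle.liftIco_continuous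
    · simp [hf, (hper 0).symm]
    · exact (Complex.continuous_ofReal.comp hψc).continuousOn
  have hΦ'c : Continuous (AddCircle.liftIco (1:ℝ) 0 f') := by
    apply AddCircle.liftIco_continuous
    · simp [hf', (hderper 0).symm]
    · exact (Complex.continuous_ofReal.comp hcderiv).continuousOn
  set Φ : C(AddCircle (1:ℝ), ℂ) := ⟨_, hΦc⟩ with hΦdef
  set Φ' : C(AddCircle (1:ℝ), ℂ) := ⟨_, hΦ'c⟩ with hΦ'def
  have hΦ : ∀ x : ℝ, Φ ((x : ℝ) : AddCircle (1:ℝ)) = f x := fun x => MRP_lift_eval f hperf x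
  have hΦ' : ∀ x : ℝ, Φ' ((x : ℝ) : AddCircle (1:ℝ)) = f' x := fun x => MRP_lift_eval f' hperf' x
  have hparts : ∀ n : ℤ, n ≠ 0 → fourierCoeffOn zero_lt_one f n
      = 1 / (-2 * (π:ℂ) * Complex.I * n) *
        (fourier (-n) ((0:ℝ) : AddCircle ((1:ℝ)-0)) * (f 1 - f 0)
          - ((1:ℝ) - 0) * fourierCoeffOn zero_lt_one f' n) := by
    intro n hn
    apply fourierCoeffOn_of_hasDeriv_right zero_lt_one hn
    · exact ((Complex.continuous_ofReal.comp hψc).continuousOn)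
    · intro x _
      exact ((hψd x).ofReal_comp).hasDerivWithinAt
    · exact ((Complex.continuous_ofReal.comp hcderiv).intervalIntegrable 0 1)
  have hf10 : f 1 - f 0 = 0 := by
    have h := hper 0
    rw [zero_add] at h
    simp [hf, h]
  have hsum : Summable (fourierCoeff (Φ : AddCircle (1:ℝ) → ℂ)) := by
    apply Summable.of_norm
    have hD2 := MRP_sq_summable Φ'
    have h1n : Summable (fun n : ℤ => ((n:ℝ)^2)⁻¹) := by
      simpa [one_div] using (Real.summable_one_div_int_pow (p := 2)).2 one_lt_two
    have hB : Summable (fun n : ℤ => ‖fourierCoeff (Φ' : AddCircle (1:ℝ) → ℂ) n‖ ^ 2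
        + ((n:ℝ)^2)⁻¹ + (if n = 0 then ‖fourierCoeff (Φ : AddCircle (1:ℝ) → ℂ) 0‖ else 0)) := by
      apply Summable.add (hD2.add h1n)
      apply summable_of_finite_support
      apply Set.Finite.subset (Set.finite_singleton (0:ℤ))
      intro n hn
      by_contra hne
      simp only [Set.mem_singleton_iff] at hne
      simp [hne] at hn
    apply Summable.of_nonneg_of_le (fun n => norm_nonneg _) _ hB
    intro n
    rcases eq_or_ne n 0 with rfl | hn
    · simp
    · have hco : fourierCoeff (Φ : AddCircle (1:ℝ) → ℂ) n = fourierCoeffOn zero_lt_one f n := by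
        rw [MRP_coeff f Φ hΦ n, MRP_coeffOn]
      have hco' : fourierCoeff (Φ' : AddCircle (1:ℝ) → ℂ) n = fourierCoeffOn zero_lt_one f' n := by
        rw [MRP_coeff f' Φ' hΦ' n, MRP_coeffOn]
      rw [hco, hparts n hn, hf10]
      rw [mul_zero, zero_sub, sub_zero]
      rw [norm_mul, norm_neg, norm_mul, norm_div, norm_one]
      simp only [Complex.norm_real, norm_one, one_mul]
      set t := ‖fourierCoeffOn zero_lt_one f' n‖ with ht
      have ht0 : 0 ≤ t := norm_nonneg _
      have hnn : (1:ℝ) ≤ |(n:ℝ)| := by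
        rw [← Int.cast_abs]
        exact_mod_cast Int.one_le_abs hn
      have hden : ‖(-2 * (π:ℂ) * Complex.I * n)‖ = 2 * π * |(n:ℝ)| := by
        rw [norm_mul, norm_mul, norm_mul]
        simp only [Complex.norm_real, Complex.norm_intCast, Complex.norm_I, norm_neg,
          Complex.norm_ofNat, Real.norm_eq_abs, mul_one]
        rw [_root_.abs_of_nonneg Real.pi_pos.le]
      rw [hco', hden]
      set s := |(n:ℝ)| with hs
      have hs1 : (1:ℝ) ≤ s := by
        rw [hs, ← Int.cast_abs]
        exact_mod_cast Int.one_le_abs hn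
      have hs0 : (0:ℝ) < s := lt_of_lt_of_le one_pos hs1
      have hsq : ((n:ℝ)^2) = s^2 := (_root_.sq_abs _).symm
      rw [hsq]
      have hr : (s^2)⁻¹ * s^2 = 1 := inv_mul_cancel₀ (by positivity)
      have hsplit : (if n = 0 then ‖fourierCoeff (Φ : AddCircle (1:ℝ) → ℂ) 0‖ else 0) = 0 := by
        simp [hn]
      rw [hsplit, add_zero, ← ht]
      rw [one_div, inv_mul_eq_div, div_le_iff₀ (by positivity : (0:ℝ) < 2 * π * s)]
      nlinarith [sq_nonneg (t*s - 1), Real.pi_gt_three, sq_nonneg s, sq_nonneg t,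
        mul_nonneg ht0 hs0.le, mul_nonneg (mul_nonneg ht0 ht0) hs0.le,
        mul_nonneg (inv_nonneg.2 (sq_nonneg s)) hs0.le,
        mul_le_mul_of_nonneg_right hs1 (mul_nonneg (mul_nonneg ht0 ht0) hs0.le)]
  have hps := has_pointwise_sum_fourier_series_of_summable hsum ((y:ℝ) : AddCircle (1:ℝ))
  have heq : (fun i : ℤ => fourierCoeff (Φ : AddCircle (1:ℝ) → ℂ) i
        • fourier i ((y:ℝ) : AddCircle (1:ℝ)))
      = (fun m : ℤ =>
      (∫ x in (0:ℝ)..1, (ψ x : ℂ) * Complex.exp (-(2 * (π:ℂ) * Complex.I * m * x)))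
        * Complex.exp (2 * (π:ℂ) * Complex.I * m * y)) := by
    funext m
    rw [MRP_coeff f Φ hΦ m, smul_eq_mul, fourier_coe_apply]
    push_cast
    rw [div_one]
  rw [heq, hΦ y] at hps
  exact hps

private lemma MRP_root_sum (q : ℕ) (hq : 1 ≤ q) (m : ℤ) :
    (∑ j ∈ Finset.range q, Complex.exp (2 * (π:ℂ) * Complex.I * m * (j / q)))
      = if (q:ℤ) ∣ m then (q:ℂ) else 0 := by
  have hq0 : (q:ℂ) ≠ 0 := Nat.cast_ne_zero.2 (by omega)
  set z : ℂ := Complex.exp (2 * (π:ℂ) * Complex.I * m / q) with hz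
  have hterm : ∀ j : ℕ, Complex.exp (2 * (π:ℂ) * Complex.I * m * (j / q)) = z ^ j := by
    intro j
    rw [hz, ← Complex.exp_nat_mul]
    congr 1
    field_simp
  simp_rw [hterm]
  by_cases hd : (q:ℤ) ∣ m
  · obtain ⟨k, hk⟩ := hd
    have hz1 : z = 1 := by
      rw [hz, hk]
      push_cast
      have h4 : 2 * (π:ℂ) * Complex.I * ((q:ℂ) * (k:ℂ)) / (q:ℂ)
          = (k:ℂ) * (2 * π * Complex.I) := by
        field_simp
      rw [h4, Complex.exp_int_mul_two_pi_mul_I]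
    have hdvd : (q:ℤ) ∣ m := ⟨k, hk⟩
    simp [hz1, if_pos hdvd]
  · have hz1 : z ≠ 1 := by
      intro h
      rw [hz, Complex.exp_eq_one_iff] at h
      obtain ⟨n, hn⟩ := h
      apply hd
      refine ⟨n, ?_⟩
      rw [mul_comm]
      have h2pi : (2 * (π:ℂ) * Complex.I) ≠ 0 := by
        simp [Real.pi_ne_zero, Complex.I_ne_zero]
      have h2 : (m : ℂ) = n * q := by
        rw [div_eq_iff hq0] at hn
        apply mul_left_cancel₀ h2pi
        linear_combination hn
      exact_mod_cast h2
    rw [geom_sum_eq hz1]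
    have hzq : z ^ q = 1 := by
      rw [hz, ← Complex.exp_nat_mul]
      have : (q:ℂ) * (2 * (π:ℂ) * Complex.I * m / q) = m * (2 * π * Complex.I) := by
        field_simp
      rw [this, Complex.exp_int_mul_two_pi_mul_I]
    rw [hzq]
    simp [hd]

end helpers

set_option maxHeartbeats 1000000 in
theorem min_resonant_part_pos_of_min_pos
    (ψ : ℝ → ℝ) (hψ1 : ContDiff ℝ 1 ψ) (hψper : ∀ x, ψ (x + 1) = ψ x)
    (hψmean : (∫ x in (0:ℝ)..1, ψ x) = 0)
    (p : ℤ) (q : ℕ) (hq : 1 ≤ q) (hpq : Nat.Coprime p.natAbs q)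
    (a : ℝ)
    (c : ℤ → ℂ)
    (hc : ∀ m : ℤ, c m = ∫ x in (0:ℝ)..1,
      (ψ x : ℂ) * Complex.exp (-(2 * (π : ℂ) * Complex.I * (m : ℂ) * (x : ℂ))))
    (Ψ : ℝ → ℝ)
    (hΨ : ∀ x : ℝ, (Ψ x : ℂ) =
      ∑' n : ℤ, c (n * q) * Complex.exp (2 * (π : ℂ) * Complex.I * (n : ℂ) * (q : ℂ) * (x : ℂ)))
    (hmin : ∀ x ∈ Set.Icc (0:ℝ) 1, 0 < a + ψ x) :
    ∀ x ∈ Set.Icc (0:ℝ) 1, 0 < a + Ψ x := by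
  intro x _
  have hper : Function.Periodic ψ 1 := hψper
  have hqR : (0:ℝ) < q := by exact_mod_cast Nat.pos_of_ne_zero (by omega)
  have hqC : (q:ℂ) ≠ 0 := Nat.cast_ne_zero.2 (by omega)
  have hqZ : ((q:ℤ)) ≠ 0 := by exact_mod_cast (by omega : q ≠ 0)
  -- positivity of a + ψ everywhere
  have hpos : ∀ y : ℝ, 0 < a + ψ y := by
    intro y
    have h2 := hper.sub_int_mul_eq (x := y) ⌊y⌋
    rw [mul_one] at h2
    rw [← Int.fract] at h2
    rw [← h2]
    exact hmin _ ⟨Int.fract_nonneg y, (Int.fract_lt_one y).le⟩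
  -- Fourier inversion with coefficients c
  have hinv : ∀ y : ℝ, HasSum
      (fun m : ℤ => c m * Complex.exp (2 * (π:ℂ) * Complex.I * m * y)) ((ψ y : ℂ)) := by
    intro y
    have h := MRP_inversion ψ hψ1 hper y
    have he : (fun m : ℤ =>
        (∫ t in (0:ℝ)..1, (ψ t : ℂ) * Complex.exp (-(2 * (π:ℂ) * Complex.I * m * t)))
          * Complex.exp (2 * (π:ℂ) * Complex.I * m * y))
        = fun m : ℤ => c m * Complex.exp (2 * (π:ℂ) * Complex.I * m * y) := by
      funext m
      rw [hc m]
    rwa [he] at h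
  -- averaged sums
  have hsumF : HasSum
      (fun m : ℤ => ∑ j ∈ Finset.range q,
        (q:ℂ)⁻¹ * (c m * Complex.exp (2 * (π:ℂ) * Complex.I * m * ((x:ℂ) + (j:ℂ)/(q:ℂ)))))
      (∑ j ∈ Finset.range q, (q:ℂ)⁻¹ * ((ψ (x + (j:ℝ)/q) : ℝ) : ℂ)) := by
    apply hasSum_sum
    intro j _
    have h := (hinv (x + (j:ℝ)/q)).mul_left ((q:ℂ)⁻¹)
    have hcast : ((x + (j:ℝ)/q : ℝ) : ℂ) = (x:ℂ) + (j:ℂ)/(q:ℂ) := by push_cast; ring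
    rw [hcast] at h
    exact h
  -- identify the m-th term
  have hFeq : (fun m : ℤ => ∑ j ∈ Finset.range q,
        (q:ℂ)⁻¹ * (c m * Complex.exp (2 * (π:ℂ) * Complex.I * m * ((x:ℂ) + (j:ℂ)/(q:ℂ)))))
      = fun m : ℤ => if (q:ℤ) ∣ m
          then c m * Complex.exp (2 * (π:ℂ) * Complex.I * m * x) else 0 := by
    funext m
    have hterm : ∀ j ∈ Finset.range q,
        (q:ℂ)⁻¹ * (c m * Complex.exp (2 * (π:ℂ) * Complex.I * m * ((x:ℂ) + (j:ℂ)/(q:ℂ))))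
        = ((q:ℂ)⁻¹ * (c m * Complex.exp (2 * (π:ℂ) * Complex.I * m * x)))
            * Complex.exp (2 * (π:ℂ) * Complex.I * m * ((j:ℂ)/(q:ℂ))) := by
      intro j _
      rw [show 2 * (π:ℂ) * Complex.I * m * ((x:ℂ) + (j:ℂ)/(q:ℂ))
          = 2 * (π:ℂ) * Complex.I * m * x + 2 * (π:ℂ) * Complex.I * m * ((j:ℂ)/(q:ℂ))
          from by ring, Complex.exp_add]
      ring
    rw [Finset.sum_congr rfl hterm, ← Finset.mul_sum, MRP_root_sum q hq m]
    by_cases hd : (q:ℤ) ∣ m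
    · rw [if_pos hd, if_pos hd]
      field_simp
    · rw [if_neg hd, if_neg hd, mul_zero]
  rw [hFeq] at hsumF
  -- reindex over multiples of q
  have hinj : Function.Injective (fun n : ℤ => n * (q:ℤ)) := mul_left_injective₀ hqZ
  have hsupp : ∀ m : ℤ, m ∉ Set.range (fun n : ℤ => n * (q:ℤ)) →
      (if (q:ℤ) ∣ m then c m * Complex.exp (2 * (π:ℂ) * Complex.I * m * x) else 0) = 0 := by
    intro m hm
    rw [if_neg]
    intro ⟨k, hk⟩
    refine hm ⟨k, ?_⟩
    show k * (q:ℤ) = m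
    rw [mul_comm]
    exact hk.symm
  have hsum2 := (hinj.hasSum_iff hsupp).2 hsumF
  have hcomp : ((fun m : ℤ => if (q:ℤ) ∣ m
        then c m * Complex.exp (2 * (π:ℂ) * Complex.I * m * x) else 0)
        ∘ (fun n : ℤ => n * (q:ℤ)))
      = fun n : ℤ => c (n * q) * Complex.exp (2 * (π:ℂ) * Complex.I * n * q * x) := by
    funext n
    simp only [Function.comp_apply]
    rw [if_pos (Dvd.intro_left n rfl)]
    congr 2
    push_cast
    ring
  rw [hcomp] at hsum2
  -- identify Ψ x
  have hΨx : (Ψ x : ℂ) = ∑ j ∈ Finset.range q, (q:ℂ)⁻¹ * ((ψ (x + (j:ℝ)/q) : ℝ) : ℂ) := by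
    rw [hΨ x]
    exact hsum2.tsum_eq
  have hΨxR : Ψ x = ∑ j ∈ Finset.range q, (q:ℝ)⁻¹ * ψ (x + (j:ℝ)/q) := by
    apply Complex.ofReal_injective
    rw [hΨx]
    push_cast
    rfl
  -- conclude
  have key : a + Ψ x = ∑ j ∈ Finset.range q, (q:ℝ)⁻¹ * (a + ψ (x + (j:ℝ)/q)) := by
    rw [hΨxR]
    have h1 : ∑ j ∈ Finset.range q, (q:ℝ)⁻¹ * (a + ψ (x + (j:ℝ)/q))
        = (q:ℝ) * ((q:ℝ)⁻¹ * a) + ∑ j ∈ Finset.range q, (q:ℝ)⁻¹ * ψ (x + (j:ℝ)/q) := by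
      simp only [mul_add, Finset.sum_add_distrib, Finset.sum_const, Finset.card_range,
        nsmul_eq_mul]
    rw [h1, show (q:ℝ) * ((q:ℝ)⁻¹ * a) = a from by field_simp]
  rw [key]
  apply Finset.sum_pos
  · intro j _
    exact mul_pos (inv_pos.2 hqR) (hpos _)
  · exact Finset.nonempty_range_iff.2 (by omega)
end

section
/- Consider the Arnold circle map with lift F(x,α,β) = x + α + β sin(2πx), and a C¹ path μ ↦ (α(μ), β(μ)) with (α(0), β(0)) = (p/q, 0), where p and q are coprime integers with 0 ≤ p < q and q ≥ 2, and |β(μ)| < 1/(2π) for all μ near 0. If 0 < |α'(0)| < ∞, then the rotation number ρ(μ) of F(·, α(μ), β(μ)) is differentiable at μ = 0 and ρ'(0) = α'(0). -/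
open Filter Real Asymptotics

/-- `r` is the rotation number of the lift `F`, i.e. `(Fⁿ(0) - 0)/n → r`. -/
def HasRotNum (F : ℝ → ℝ) (r : ℝ) : Prop :=
  Filter.Tendsto (fun n : ℕ => F^[n] 0 / n) Filter.atTop (nhds r)

/-! ### Auxiliary lemmas -/

lemma sin_lip (a b : ℝ) : |Real.sin a - Real.sin b| ≤ |a - b| := by
  rw [Real.sin_sub_sin]
  calc |2 * Real.sin ((a - b) / 2) * Real.cos ((a + b) / 2)|
      = 2 * |Real.sin ((a - b) / 2)| * |Real.cos ((a + b) / 2)| := by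
        rw [abs_mul, abs_mul]; norm_num
    _ ≤ 2 * |(a - b) / 2| * 1 := by
        apply mul_le_mul (by nlinarith [Real.abs_sin_le_abs (x := (a - b)/2)])
          (Real.abs_cos_le_one _) (abs_nonneg _) (by positivity)
    _ = |a - b| := by rw [abs_div]; rw [abs_two]; ring

/-- Bounds on displacement give bounds on the rotation-number limit. -/
lemma rot_bound {G : ℝ → ℝ} {a b L : ℝ}
    (h1 : ∀ x, a ≤ G x - x) (h2 : ∀ x, G x - x ≤ b)
    (hL : Filter.Tendsto (fun n : ℕ => G^[n] 0 / n) Filter.atTop (nhds L)) :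
    a ≤ L ∧ L ≤ b := by
  have key : ∀ n : ℕ, (n : ℝ) * a ≤ G^[n] 0 ∧ G^[n] 0 ≤ (n : ℝ) * b := by
    intro n
    induction n with
    | zero => simp
    | succ n ih =>
      rw [Function.iterate_succ_apply']
      constructor
      · have := h1 (G^[n] 0); push_cast; nlinarith [ih.1]
      · have := h2 (G^[n] 0); push_cast; nlinarith [ih.2]
  have hev : ∀ᶠ n : ℕ in atTop, a ≤ G^[n] 0 / n ∧ G^[n] 0 / n ≤ b := by
    filter_upwards [eventually_ge_atTop 1] with n hn
    have hn' : (0 : ℝ) < n := by exact_mod_cast hn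
    obtain ⟨h1', h2'⟩ := key n
    constructor
    · rw [le_div_iff₀ hn']; linarith
    · rw [div_le_iff₀ hn']; linarith
  constructor
  · exact ge_of_tendsto hL (hev.mono fun n h => h.1)
  · exact le_of_tendsto hL (hev.mono fun n h => h.2)

/-- The iterate `F^[q]` has rotation-number limit `q * r`. -/
lemma rot_iterate {F : ℝ → ℝ} {r : ℝ} (hF : HasRotNum F r) {q : ℕ} (hq : 1 ≤ q) :
    Filter.Tendsto (fun n : ℕ => (F^[q])^[n] 0 / n) Filter.atTop (nhds ((q : ℝ) * r)) := by
  have hsub : Filter.Tendsto (fun n : ℕ => F^[q * n] 0 / (q * n : ℕ)) Filter.atTop (nhds r) :=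
    hF.comp (tendsto_atTop_atTop.mpr fun m => ⟨m, fun n hn => le_trans hn (Nat.le_mul_of_pos_left n hq)⟩)
  have := hsub.const_mul (q : ℝ)
  apply this.congr
  intro n
  rw [← Function.iterate_mul]
  rcases Nat.eq_zero_or_pos n with h | h
  · simp [h]
  · push_cast
    field_simp

/-- The vanishing of the resonant sum for `q ≥ 2`, `gcd(p,q)=1`. -/
lemma sin_sum_zero (p : ℤ) (q : ℕ) (hq : 2 ≤ q) (hpq : Nat.Coprime p.natAbs q) (θ : ℝ) :
    ∑ k ∈ Finset.range q, Real.sin (θ + k * (2 * π * (p / q))) = 0 := by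
  have hq0 : (q : ℝ) ≠ 0 := by positivity
  set φ : ℝ := 2 * π * (p / q) with hφ
  set z : ℂ := Complex.exp (φ * Complex.I) with hz
  have hz1 : z ≠ 1 := by
    intro h
    rw [hz, Complex.exp_eq_one_iff] at h
    obtain ⟨n, hn⟩ := h
    have hn' : (φ:ℂ) * Complex.I = ((2 * π * n : ℝ) : ℂ) * Complex.I := by
      push_cast; linear_combination hn
    have : (φ : ℂ) = ((2 * π * n : ℝ) : ℂ) := mul_right_cancel₀ Complex.I_ne_zero hn'
    have hφn : φ = 2 * π * n := by exact_mod_cast this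
    have hpn : (p : ℝ) / q = n := by
      have hπ : (0:ℝ) < π := Real.pi_pos
      rw [hφ] at hφn
      nlinarith
    have hpqn : (p : ℝ) = n * q := by field_simp at hpn; linarith
    have hpqz : p = n * (q : ℤ) := by exact_mod_cast hpqn
    have hdvd : (q : ℤ) ∣ p := ⟨n, by linarith [hpqz]⟩
    have : q ∣ p.natAbs := Int.natAbs_dvd_natAbs.mpr (by simpa using hdvd)
    have : q ∣ 1 := hpq ▸ Nat.dvd_gcd this dvd_rfl
    rw [Nat.dvd_one] at this
    omega
  have hzq : z ^ q = 1 := by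
    rw [hz, ← Complex.exp_nat_mul]
    have hre : (q:ℝ) * φ = 2 * π * p := by rw [hφ]; field_simp
    have hreC : (q:ℂ) * (φ:ℂ) = 2 * (π:ℂ) * (p:ℂ) := by exact_mod_cast congrArg (fun t : ℝ => (t:ℂ)) hre
    have : (q : ℂ) * ((φ:ℂ) * Complex.I) = (p : ℂ) * (2 * (π:ℂ) * Complex.I) := by
      linear_combination Complex.I * hreC
    rw [this]
    exact_mod_cast Complex.exp_int_mul_two_pi_mul_I p
  have him : ∀ k : ℕ, Real.sin (θ + k * φ) = (Complex.exp ((θ:ℂ) * Complex.I) * z ^ k).im := by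
    intro k
    rw [hz, ← Complex.exp_nat_mul, ← Complex.exp_add]
    have : (θ:ℂ) * Complex.I + (k:ℂ) * (φ * Complex.I) = ((θ + k * φ : ℝ) : ℂ) * Complex.I := by
      push_cast; ring
    rw [this, Complex.exp_ofReal_mul_I_im]
  calc ∑ k ∈ Finset.range q, Real.sin (θ + k * φ)
      = (∑ k ∈ Finset.range q, Complex.exp ((θ:ℂ) * Complex.I) * z ^ k).im := by
        rw [Complex.im_sum]; exact Finset.sum_congr rfl fun k _ => him k
    _ = (Complex.exp ((θ:ℂ) * Complex.I) * ((z ^ q - 1) / (z - 1))).im := by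
        rw [← Finset.mul_sum, geom_sum_eq hz1]
    _ = 0 := by rw [hzq]; simp

/-- The iterates of the Arnold lift remain close to the rigid rotation. -/
lemma iter_close (a b : ℝ) (k : ℕ) (x : ℝ) :
    |(fun x => x + a + b * Real.sin (2 * π * x))^[k] x - x - k * a| ≤ k * |b| := by
  induction k with
  | zero => simp
  | succ k ih =>
    rw [Function.iterate_succ_apply']
    set y := (fun x => x + a + b * Real.sin (2 * π * x))^[k] x with hy
    show |y + a + b * Real.sin (2 * π * y) - x - (k + 1 : ℕ) * a| ≤ (k + 1 : ℕ) * |b|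
    have h1 : |b * Real.sin (2 * π * y)| ≤ |b| := by
      rw [abs_mul]
      nlinarith [Real.abs_sin_le_one (2 * π * y), abs_nonneg b]
    push_cast
    have : y + a + b * Real.sin (2 * π * y) - x - (↑k + 1) * a
        = (y - x - k * a) + b * Real.sin (2 * π * y) := by ring
    rw [this]
    calc |(y - x - ↑k * a) + b * Real.sin (2 * π * y)|
        ≤ |y - x - ↑k * a| + |b * Real.sin (2 * π * y)| := abs_add_le _ _
      _ ≤ ↑k * |b| + |b| := add_le_add ih h1
      _ = (↑k + 1) * |b| := by ring

/-- Exact formula for the `n`-th iterate. -/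
lemma iter_formula (a b : ℝ) (n : ℕ) (x : ℝ) :
    (fun x => x + a + b * Real.sin (2 * π * x))^[n] x
      = x + n * a + b * ∑ k ∈ Finset.range n,
          Real.sin (2 * π * ((fun x => x + a + b * Real.sin (2 * π * x))^[k] x)) := by
  induction n with
  | zero => simp
  | succ n ih =>
    rw [Function.iterate_succ_apply', ih, Finset.sum_range_succ]
    show (x + ↑n * a + b * _) + a + b * _ = _
    push_cast
    rw [ih]
    ring

/-- The key second-order estimate on the displacement of `F^[q]`. -/
lemma key_est (p : ℤ) (q : ℕ) (hq : 2 ≤ q) (hpq : Nat.Coprime p.natAbs q)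
    (a b x : ℝ) :
    |(fun x => x + a + b * Real.sin (2 * π * x))^[q] x - (x + q * a)|
      ≤ |b| * (2 * π * q * q * (|b| + |a - p / q|)) := by
  set F := fun x => x + a + b * Real.sin (2 * π * x) with hF
  have hform := iter_formula a b q x
  have hzero := sin_sum_zero p q hq hpq (2 * π * x)
  have hsum : |∑ k ∈ Finset.range q, Real.sin (2 * π * (F^[k] x))|
      ≤ 2 * π * q * q * (|b| + |a - p / q|) := by
    have : ∑ k ∈ Finset.range q, Real.sin (2 * π * (F^[k] x))
        = ∑ k ∈ Finset.range q,
            (Real.sin (2 * π * (F^[k] x)) - Real.sin (2 * π * x + k * (2 * π * (p / q)))) := by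
      rw [Finset.sum_sub_distrib, hzero, sub_zero]
    rw [this]
    calc |∑ k ∈ Finset.range q, (Real.sin (2 * π * (F^[k] x)) - Real.sin (2 * π * x + k * (2 * π * (p / q))))|
        ≤ ∑ k ∈ Finset.range q, |Real.sin (2 * π * (F^[k] x)) - Real.sin (2 * π * x + k * (2 * π * (p / q)))| :=
          Finset.abs_sum_le_sum_abs _ _
      _ ≤ ∑ _k ∈ Finset.range q, 2 * π * q * (|b| + |a - p / q|) := by
          apply Finset.sum_le_sum
          intro k hk
          have hk' : (k : ℝ) ≤ q := by
            exact_mod_cast le_of_lt (Finset.mem_range.mp hk)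
          calc |Real.sin (2 * π * (F^[k] x)) - Real.sin (2 * π * x + k * (2 * π * (p / q)))|
              ≤ |2 * π * (F^[k] x) - (2 * π * x + k * (2 * π * (p / q)))| := sin_lip _ _
            _ = 2 * π * |F^[k] x - x - k * (p / q)| := by
                rw [show 2 * π * (F^[k] x) - (2 * π * x + k * (2 * π * (p / q)))
                    = 2 * π * (F^[k] x - x - k * (p / q)) by ring, abs_mul]
                congr 1
                rw [abs_of_pos]; positivity
            _ ≤ 2 * π * (k * |b| + k * |a - p / q|) := by
                have h1 : |F^[k] x - x - k * (p / q)| ≤ k * |b| + k * |a - p/q| := by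
                  have h2 := iter_close a b k x
                  have h3 : F^[k] x - x - k * (p / q)
                      = (F^[k] x - x - k * a) + k * (a - p / q) := by ring
                  rw [h3]
                  calc |(F^[k] x - x - k * a) + k * (a - p / q)|
                      ≤ |F^[k] x - x - k * a| + |(k:ℝ) * (a - p / q)| := abs_add_le _ _
                    _ ≤ k * |b| + k * |a - p/q| := by
                        rw [abs_mul, Nat.abs_cast]
                        exact add_le_add h2 le_rfl
                have hπ : (0:ℝ) < π := Real.pi_pos
                nlinarith
            _ ≤ 2 * π * q * (|b| + |a - p / q|) := by
                have hπ : (0:ℝ) < π := Real.pi_pos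
                have hb := abs_nonneg b
                have ht := abs_nonneg (a - p/q)
                have hk0 : (0:ℝ) ≤ k := Nat.cast_nonneg k
                nlinarith [mul_nonneg (sub_nonneg.mpr hk') (add_nonneg hb ht)]
      _ = 2 * π * q * q * (|b| + |a - p / q|) := by
          rw [Finset.sum_const, Finset.card_range]
          push_cast
          ring
  have : F^[q] x - (x + q * a) = b * ∑ k ∈ Finset.range q, Real.sin (2 * π * (F^[k] x)) := by
    rw [hform]; ring
  rw [this, abs_mul]
  exact mul_le_mul_of_nonneg_left hsum (abs_nonneg b)

theorem arnold_map_rotation_number_differentiable_q_ge_two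
    (p : ℤ) (q : ℕ) (hq : 2 ≤ q) (hp0 : 0 ≤ p) (hpq' : p < (q : ℤ))
    (hpq : Nat.Coprime p.natAbs q)
    (α β : ℝ → ℝ) (hα : ContDiff ℝ 1 α) (hβ : ContDiff ℝ 1 β)
    (hα0 : α 0 = (p : ℝ) / q) (hβ0 : β 0 = 0)
    (ε : ℝ) (hε : 0 < ε)
    (hβsmall : ∀ μ : ℝ, |μ| < ε → |β μ| < 1 / (2 * π))
    (hα' : deriv α 0 ≠ 0)
    (ρ : ℝ → ℝ)
    (hρ : ∀ μ : ℝ, |μ| < ε →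
      HasRotNum (fun x => x + α μ + β μ * Real.sin (2 * π * x)) (ρ μ)) :
    HasDerivAt ρ (deriv α 0) 0 := by
  have hq1 : 1 ≤ q := le_trans (by norm_num) hq
  have hq0 : (0:ℝ) < q := by positivity
  -- pointwise estimate on |ρ μ - α μ|
  have hEst : ∀ μ : ℝ, |μ| < ε →
      |ρ μ - α μ| ≤ |β μ| * (2 * π * q * (|β μ| + |α μ - α 0|)) := by
    intro μ hμ
    set F := fun x => x + α μ + β μ * Real.sin (2 * π * x) with hF
    set M := |β μ| * (2 * π * q * q * (|β μ| + |α μ - (p:ℝ) / q|)) with hM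
    have hkey : ∀ x, |F^[q] x - (x + q * α μ)| ≤ M := fun x => key_est p q hq hpq (α μ) (β μ) x
    have h1 : ∀ x, q * α μ - M ≤ F^[q] x - x := by
      intro x; have := hkey x; rw [abs_le] at this; linarith [this.1]
    have h2 : ∀ x, F^[q] x - x ≤ q * α μ + M := by
      intro x; have := hkey x; rw [abs_le] at this; linarith [this.2]
    have hlim := rot_iterate (hρ μ hμ) hq1
    obtain ⟨hl, hr⟩ := rot_bound h1 h2 hlim
    have : |(q:ℝ) * ρ μ - q * α μ| ≤ M := abs_le.mpr ⟨by linarith, by linarith⟩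
    rw [show (q:ℝ) * ρ μ - q * α μ = (q:ℝ) * (ρ μ - α μ) by ring, abs_mul,
      abs_of_pos hq0] at this
    rw [hα0]
    calc |ρ μ - α μ| ≤ M / q := by rw [le_div_iff₀ hq0]; linarith
      _ = |β μ| * (2 * π * q * (|β μ| + |α μ - (p:ℝ) / q|)) := by
          rw [hM]; field_simp
  -- asymptotics
  have hβd : (fun μ => β μ - β 0) =O[nhds 0] (fun μ => μ - 0) :=
    ((hβ.differentiable one_ne_zero) 0).hasFDerivAt.isBigO_sub
  have hαd : (fun μ => α μ - α 0) =O[nhds 0] (fun μ => μ - 0) :=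
    ((hα.differentiable one_ne_zero) 0).hasFDerivAt.isBigO_sub
  simp only [hβ0, sub_zero] at hβd hαd
  have hprod : (fun μ => β μ * (|β μ| + |α μ - α 0|)) =O[nhds 0] (fun μ : ℝ => μ * μ) :=
    hβd.mul (hβd.norm_left.add hαd.norm_left)
  have hsq : (fun μ : ℝ => μ * μ) =o[nhds 0] (fun μ : ℝ => μ) := by
    have h1 : (fun μ : ℝ => μ) =o[nhds (0:ℝ)] (fun _ => (1:ℝ)) :=
      (isLittleO_one_iff ℝ).mpr (by simpa using (continuous_id'.tendsto (0:ℝ)))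
    have := (isBigO_refl (fun μ : ℝ => μ) (nhds 0)).mul_isLittleO h1
    simpa using this
  have hdiff : (fun μ => ρ μ - α μ) =o[nhds 0] (fun μ : ℝ => μ) := by
    have hbig : (fun μ => ρ μ - α μ) =O[nhds 0] (fun μ => β μ * (|β μ| + |α μ - α 0|)) := by
      apply IsBigO.of_bound (2 * π * q)
      have hev : ∀ᶠ μ : ℝ in nhds 0, |μ| < ε := by
        have : Metric.ball (0:ℝ) ε ∈ nhds (0:ℝ) := Metric.ball_mem_nhds 0 hε
        filter_upwards [this] with μ hμ
        simpa [Real.dist_eq] using hμ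
      filter_upwards [hev] with μ hμ
      have := hEst μ hμ
      have hπ : (0:ℝ) < π := Real.pi_pos
      have h0 : (0:ℝ) ≤ |β μ| + |α μ - α 0| := by positivity
      simp only [Real.norm_eq_abs, abs_mul]
      calc |ρ μ - α μ| ≤ |β μ| * (2 * π * q * (|β μ| + |α μ - α 0|)) := this
        _ = 2 * π * q * (|β μ| * (|β μ| + |α μ - α 0|)) := by ring
        _ ≤ 2 * π * ↑q * (|β μ| * |(|β μ| + |α μ - α 0|)|) := by
            rw [abs_of_nonneg h0]
    exact hbig.trans_isLittleO (hprod.trans_isLittleO hsq)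
  -- ρ 0 = α 0
  have hρ0 : ρ 0 = α 0 := by
    have := hEst 0 (by simpa using hε)
    rw [hβ0] at this
    simp at this
    have : |ρ 0 - α 0| ≤ 0 := by simpa using this
    have := abs_nonneg (ρ 0 - α 0)
    have h := le_antisymm ‹|ρ 0 - α 0| ≤ 0› (abs_nonneg _)
    rw [abs_eq_zero] at h
    linarith [sub_eq_zero.mp h]
  -- conclude
  have hαder : HasDerivAt α (deriv α 0) 0 := ((hα.differentiable one_ne_zero) 0).hasDerivAt
  rw [hasDerivAt_iff_isLittleO] at hαder ⊢
  have : (fun μ : ℝ => ρ μ - ρ 0 - (μ - 0) • deriv α 0)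
      = fun μ => (α μ - α 0 - (μ - 0) • deriv α 0) + (ρ μ - α μ) := by
    funext μ; rw [hρ0]; ring
  rw [this]
  have hdiff' : (fun μ => ρ μ - α μ) =o[nhds 0] fun x' : ℝ => x' - 0 := by simpa using hdiff
  exact hαder.add hdiff'
end

section
/- Consider the Arnold circle map with lift F(x,α,β) = x + α + β sin(2πx), and a C¹ path μ ↦ (α(μ), β(μ)) with (α(0), β(0)) = (0, 0). If |α'(0)| > |β'(0)|, then the rotation number ρ(μ) of F(·, α(μ), β(μ)) is differentiable at μ = 0 and ρ'(0) = sign(α'(0))·√(α'(0)² − β'(0)²). -/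
open Filter Real
open intervalIntegral

section ArnoldAux


lemma arnold_deriv (p q : ℝ) (hq : |q| < p) {x : ℝ}
    (hx : x ∈ Set.Ioo (-(1/2):ℝ) (1/2)) :
    HasDerivAt (fun y => (1/(π * Real.sqrt (p^2 - q^2))) *
      Real.arctan ((p * Real.tan (π*y) + q)/Real.sqrt (p^2 - q^2)))
      ((p + q * Real.sin (2*π*x))⁻¹) x := by
  have hp : 0 < p := (abs_nonneg q).trans_lt hq
  have hq2 : q^2 < p^2 := by nlinarith [abs_nonneg q, sq_abs q, neg_abs_le q, le_abs_self q]
  set r := Real.sqrt (p^2 - q^2) with hrdef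
  have hr2 : r^2 = p^2 - q^2 := Real.sq_sqrt (by linarith)
  have hr : 0 < r := Real.sqrt_pos.2 (by linarith)
  have hcos : Real.cos (π*x) ≠ 0 := by
    apply ne_of_gt
    apply Real.cos_pos_of_mem_Ioo
    constructor
    · nlinarith [Real.pi_pos, hx.1]
    · nlinarith [Real.pi_pos, hx.2]
  have hlin : HasDerivAt (fun y : ℝ => π * y) π x := by
    simpa using (hasDerivAt_id x).const_mul π
  have htan : HasDerivAt (fun y => Real.tan (π*y)) ((1 / Real.cos (π*x)^2) * π) x :=
    (Real.hasDerivAt_tan hcos).comp x hlin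
  have hinner : HasDerivAt (fun y => (p * Real.tan (π*y) + q)/r)
      ((p * ((1 / Real.cos (π*x)^2) * π))/r) x :=
    ((htan.const_mul p).add_const q).div_const r
  have harc := (Real.hasDerivAt_arctan ((p * Real.tan (π*x) + q)/r)).comp x hinner
  have hfull := harc.const_mul (1/(π * r))
  refine hfull.congr_deriv ?_
  symm
  set c := Real.cos (π*x) with hc
  set s := Real.sin (π*x) with hs
  have hsc : s^2 + c^2 = 1 := Real.sin_sq_add_cos_sq _
  have hsin2 : Real.sin (2*π*x) = 2*s*c := by
    rw [show 2*π*x = 2*(π*x) by ring, Real.sin_two_mul]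
  have htanv : Real.tan (π*x) = s / c := Real.tan_eq_sin_div_cos _
  have hden : 0 < p + q * Real.sin (2*π*x) := by
    nlinarith [Real.neg_one_le_sin (2*π*x), Real.sin_le_one (2*π*x), le_abs_self q, neg_abs_le q]
  rw [hsin2] at hden
  have hdenne : p + q * (2*s*c) ≠ 0 := ne_of_gt hden
  rw [hsin2, htanv]
  show (p + q * (2*s*c))⁻¹ = 1/(π*r) * (1/(1 + ((p * (s/c) + q)/r)^2) * (p * ((1/c^2) * π)/r))
  have key : (1 + ((p*(s/c)+q)/r)^2) * (r^2*c^2) = p * (p + q*(2*s*c)) := by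
    field_simp
    linear_combination c^2*hr2 + p^2*hsc
  rw [show (1:ℝ)/(π*r) * (1/(1 + ((p * (s/c) + q)/r)^2) * (p * ((1/c^2) * π)/r))
      = p / ((1 + ((p * (s/c) + q)/r)^2)*(r^2*c^2)) from by field_simp, key]
  field_simp

lemma arnold_integrand_pos (p q : ℝ) (hq : |q| < p) (x : ℝ) :
    0 < p + q * Real.sin (2*π*x) := by
  nlinarith [Real.neg_one_le_sin (2*π*x), Real.sin_le_one (2*π*x), le_abs_self q, neg_abs_le q]

lemma arnold_integrand_cont (p q : ℝ) (hq : |q| < p) :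
    Continuous (fun x => (p + q * Real.sin (2*π*x))⁻¹) := by
  apply Continuous.inv₀
  · exact continuous_const.add (continuous_const.mul (Real.continuous_sin.comp (continuous_const.mul continuous_id)))
  · exact fun x => (arnold_integrand_pos p q hq x).ne'

lemma arnold_integral (p q : ℝ) (hq : |q| < p) :
    ∫ x in (0:ℝ)..1, (p + q * Real.sin (2*π*x))⁻¹ = (Real.sqrt (p^2 - q^2))⁻¹ := by
  have hp : 0 < p := (abs_nonneg q).trans_lt hq
  set r := Real.sqrt (p^2 - q^2) with hrdef
  have hq2 : q^2 < p^2 := by nlinarith [abs_nonneg q, sq_abs q, neg_abs_le q, le_abs_self q]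
  have hr : 0 < r := Real.sqrt_pos.2 (by linarith)
  set f := fun x => (p + q * Real.sin (2*π*x))⁻¹ with hfdef
  have hfc : Continuous f := arnold_integrand_cont p q hq
  have hint : ∀ a b : ℝ, IntervalIntegrable f MeasureTheory.volume a b :=
    fun a b => hfc.intervalIntegrable a b
  -- periodicity: ∫ 0..1 = ∫ -1/2..1/2
  have hper : Function.Periodic f 1 := by
    intro y
    simp only [hfdef]
    rw [show 2*π*(y+1) = 2*π*y + 2*π by ring, Real.sin_add_two_pi]
  have hshift : ∫ x in (0:ℝ)..1, f x = ∫ x in (-(1/2):ℝ)..(1/2), f x := by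
    have := hper.intervalIntegral_add_eq 0 (-(1/2))
    simp only [zero_add] at this
    rw [this]
    norm_num
  rw [hshift]
  -- primitive
  set Φ := fun u => ∫ x in (-(1/2):ℝ)..u, f x with hΦdef
  have hΦc : Continuous Φ := intervalIntegral.continuous_primitive hint _
  set G := fun y => (1/(π * r)) * Real.arctan ((p * Real.tan (π*y) + q)/r) with hGdef
  -- two tendstos along 𝓝[>] 0
  have hT1 : Tendsto (fun s : ℝ => Φ (1/2 - s) - Φ (-(1/2) + s)) (nhdsWithin 0 (Set.Ioi 0))
      (nhds (Φ (1/2) - Φ (-(1/2)))) := by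
    have h1 : Tendsto (fun s : ℝ => (1:ℝ)/2 - s) (nhdsWithin 0 (Set.Ioi 0)) (nhds (1/2)) := by
      have : Tendsto (fun s : ℝ => (1:ℝ)/2 - s) (nhds 0) (nhds (1/2 - 0)) :=
        (continuous_const.sub continuous_id).tendsto 0
      simpa using this.mono_left nhdsWithin_le_nhds
    have h2 : Tendsto (fun s : ℝ => -(1:ℝ)/2 + s) (nhdsWithin 0 (Set.Ioi 0)) (nhds (-(1/2))) := by
      have : Tendsto (fun s : ℝ => -(1:ℝ)/2 + s) (nhds 0) (nhds (-1/2 + 0)) :=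
        (continuous_const.add continuous_id).tendsto 0
      have h' := this.mono_left (nhdsWithin_le_nhds (s := Set.Ioi (0:ℝ)))
      simpa [neg_div] using h'
    exact ((hΦc.tendsto _).comp h1).sub (by
      have := (hΦc.tendsto (-(1/2) : ℝ)).comp h2
      simpa [neg_div, Function.comp_def] using this)
  have hT2 : Tendsto (fun s : ℝ => G (1/2 - s) - G (-(1/2) + s)) (nhdsWithin 0 (Set.Ioi 0))
      (nhds (1/(π*r) * (π/2) - 1/(π*r) * (-(π/2)))) := by
    have htanTop : Tendsto (fun s : ℝ => Real.tan (π * (1/2 - s))) (nhdsWithin 0 (Set.Ioi 0)) atTop := by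
      apply Real.tendsto_tan_pi_div_two.comp
      rw [tendsto_nhdsWithin_iff]
      constructor
      · have : Tendsto (fun s : ℝ => π * (1/2 - s)) (nhds 0) (nhds (π * (1/2 - 0))) :=
          (continuous_const.mul (continuous_const.sub continuous_id)).tendsto 0
        have h' := this.mono_left (nhdsWithin_le_nhds (s := Set.Ioi (0:ℝ)))
        rw [show π * (1/2 - 0) = π/2 by ring] at h'
        exact h'
      · filter_upwards [self_mem_nhdsWithin] with s hs
        have : (0:ℝ) < s := hs
        have : π * (1/2 - s) < π * (1/2) := by
          apply mul_lt_mul_of_pos_left _ Real.pi_pos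
          linarith
        simpa [div_eq_mul_inv] using this
    have htanBot : Tendsto (fun s : ℝ => Real.tan (π * (-(1/2) + s))) (nhdsWithin 0 (Set.Ioi 0)) atBot := by
      apply Real.tendsto_tan_neg_pi_div_two.comp
      rw [tendsto_nhdsWithin_iff]
      constructor
      · have : Tendsto (fun s : ℝ => π * (-(1/2) + s)) (nhds 0) (nhds (π * (-(1/2) + 0))) :=
          (continuous_const.mul (continuous_const.add continuous_id)).tendsto 0
        have h' := this.mono_left (nhdsWithin_le_nhds (s := Set.Ioi (0:ℝ)))
        rw [show π * (-(1/2) + 0) = -(π/2) by ring] at h'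
        exact h'
      · filter_upwards [self_mem_nhdsWithin] with s hs
        have : (0:ℝ) < s := hs
        have : -(π/2) < π * (-(1/2) + s) := by nlinarith [Real.pi_pos]
        simpa using this
    have hargTop : Tendsto (fun s : ℝ => (p * Real.tan (π * (1/2 - s)) + q)/r)
        (nhdsWithin 0 (Set.Ioi 0)) atTop := by
      apply Tendsto.atTop_div_const hr
      exact tendsto_atTop_add_const_right _ q (htanTop.const_mul_atTop hp)
    have hargBot : Tendsto (fun s : ℝ => (p * Real.tan (π * (-(1/2) + s)) + q)/r)
        (nhdsWithin 0 (Set.Ioi 0)) atBot := by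
      apply Tendsto.atBot_div_const hr
      exact tendsto_atBot_add_const_right _ q (htanBot.const_mul_atBot hp)
    have ha1 : Tendsto (fun s : ℝ => G (1/2 - s)) (nhdsWithin 0 (Set.Ioi 0))
        (nhds (1/(π*r) * (π/2))) := by
      apply Tendsto.const_mul
      exact (Real.tendsto_arctan_atTop.mono_right nhdsWithin_le_nhds).comp hargTop
    have ha2 : Tendsto (fun s : ℝ => G (-(1/2) + s)) (nhdsWithin 0 (Set.Ioi 0))
        (nhds (1/(π*r) * (-(π/2)))) := by
      apply Tendsto.const_mul
      exact (Real.tendsto_arctan_atBot.mono_right nhdsWithin_le_nhds).comp hargBot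
    exact ha1.sub ha2
  have heq : (fun s : ℝ => Φ (1/2 - s) - Φ (-(1/2) + s)) =ᶠ[nhdsWithin 0 (Set.Ioi 0)]
      (fun s : ℝ => G (1/2 - s) - G (-(1/2) + s)) := by
    have hmem : Set.Ioo (0:ℝ) (1/2) ∈ nhdsWithin (0:ℝ) (Set.Ioi 0) := by
      apply mem_nhdsWithin.2
      exact ⟨Set.Iio (1/2), isOpen_Iio, by norm_num, by
        rintro y ⟨hy1, hy2⟩
        exact ⟨hy2, hy1⟩⟩
    filter_upwards [hmem] with s hs
    have hs0 : 0 < s := hs.1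
    have hs2 : s < 1/2 := hs.2
    have hab : (-(1/2):ℝ) + s ≤ 1/2 - s := by linarith
    have hΦdiff : Φ (1/2 - s) - Φ (-(1/2) + s) = ∫ x in (-(1/2)+s : ℝ)..(1/2 - s), f x :=
      intervalIntegral.integral_interval_sub_left (hint (-(1/2)) (1/2 - s)) (hint (-(1/2)) (-(1/2)+s))
    rw [hΦdiff]
    apply intervalIntegral.integral_eq_sub_of_hasDerivAt (fun x hx => ?_) (hint _ _)
    rw [Set.uIcc_of_le hab] at hx
    exact arnold_deriv p q hq ⟨by linarith [hx.1], by linarith [hx.2]⟩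
  have hT1' := hT1.congr' heq
  have huniq := tendsto_nhds_unique hT1' hT2
  have hΦhalf : Φ (-(1/2) : ℝ) = 0 := intervalIntegral.integral_same
  have : Φ (1/2) = 1/(π*r) * (π/2) - 1/(π*r) * (-(π/2)) := by
    rw [← huniq, hΦhalf, sub_zero]
  rw [show (∫ x in (-(1/2):ℝ)..(1/2), f x) = Φ (1/2) from rfl, this]
  field_simp
  ring



lemma rot_bound_s8 (a b r : ℝ) (hb : |b| < a)
    (hr : HasRotNum (fun x => x + a + b * Real.sin (2*π*x)) r) :
    |r - Real.sqrt (a^2-b^2)| ≤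
      Real.sqrt (a^2-b^2) * (2 * π * |b| * (a + |b|) ^ 2 / (a - |b|) ^ 2) := by
  have ha : 0 < a := (abs_nonneg b).trans_lt hb
  set F := fun x => x + a + b * Real.sin (2*π*x) with hFdef
  set g := fun x => a + b * Real.sin (2*π*x) with hgdef
  set m := a - |b| with hmdef
  set M := a + |b| with hMdef
  have hm : 0 < m := by simp [hmdef]; linarith
  have hMpos : 0 < M := by simp [hMdef]; positivity
  have hgl : ∀ x, m ≤ g x := by
    intro x
    have h1 := Real.neg_one_le_sin (2*π*x)
    have h2 := Real.sin_le_one (2*π*x)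
    simp only [hgdef, hmdef]
    nlinarith [le_abs_self b, neg_abs_le b]
  have hgu : ∀ x, g x ≤ M := by
    intro x
    have h1 := Real.neg_one_le_sin (2*π*x)
    have h2 := Real.sin_le_one (2*π*x)
    simp only [hgdef, hMdef]
    nlinarith [le_abs_self b, neg_abs_le b]
  have hgpos : ∀ x, 0 < g x := fun x => hm.trans_le (hgl x)
  have hginvc : Continuous (fun x => (g x)⁻¹) := arnold_integrand_cont a b hb
  have hint : ∀ u v : ℝ, IntervalIntegrable (fun x => (g x)⁻¹) MeasureTheory.volume u v :=
    fun u v => hginvc.intervalIntegrable u v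
  set c := Real.sqrt (a^2-b^2) with hcdef
  have hb2 : b^2 < a^2 := by nlinarith [abs_nonneg b, sq_abs b, neg_abs_le b, le_abs_self b]
  have hc : 0 < c := Real.sqrt_pos.2 (by linarith)
  have hI : ∫ x in (0:ℝ)..1, (g x)⁻¹ = c⁻¹ := arnold_integral a b hb
  set H := fun x => c * ∫ t in (0:ℝ)..x, (g t)⁻¹ with hHdef
  set E := 2 * π * |b| * M ^ 2 / m ^ 2 with hEdef
  have hE : 0 ≤ E := by positivity
  -- H is 1-periodic-translation
  have hper : Function.Periodic (fun x => (g x)⁻¹) 1 := by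
    intro y
    simp only [hgdef]
    rw [show 2*π*(y+1) = 2*π*y + 2*π by ring, Real.sin_add_two_pi]
  have hH1 : ∀ x, H (x + 1) = H x + 1 := by
    intro x
    simp only [hHdef]
    rw [← intervalIntegral.integral_add_adjacent_intervals (hint 0 x) (hint x (x+1))]
    rw [show (∫ t in x..(x+1), (g t)⁻¹) = ∫ t in (0:ℝ)..(0+1), (g t)⁻¹ from
      hper.intervalIntegral_add_eq x 0]
    rw [zero_add, hI]
    rw [mul_add, mul_inv_cancel₀ hc.ne']
  -- key increment bound
  have hkey : ∀ x, |H (F x) - H x - c| ≤ c * E := by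
    intro x
    have hFx : F x - x = g x := by simp [hFdef, hgdef]; ring
    have hdiff : H (F x) - H x = c * ∫ t in x..(F x), (g t)⁻¹ := by
      simp only [hHdef]
      rw [← mul_sub]
      congr 1
      exact intervalIntegral.integral_interval_sub_left (hint 0 (F x)) (hint 0 x)
    have hsplit : (∫ t in x..(F x), (g t)⁻¹) =
        (∫ t in x..(F x), ((g t)⁻¹ - (g x)⁻¹)) + 1 := by
      rw [intervalIntegral.integral_sub (hint x (F x))
        (intervalIntegrable_const)]
      rw [intervalIntegral.integral_const, smul_eq_mul, hFx,
        mul_inv_cancel₀ (hgpos x).ne']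
      ring
    have hbnd : |∫ t in x..(F x), ((g t)⁻¹ - (g x)⁻¹)| ≤ (2 * π * |b| * M / m ^ 2) * M := by
      have h1 : ∀ t ∈ Set.uIoc x (F x), ‖(g t)⁻¹ - (g x)⁻¹‖ ≤ 2 * π * |b| * M / m ^ 2 := by
        intro t ht
        have htx : |t - x| ≤ M := by
          have h2 : t ∈ Set.uIcc x (F x) := Set.uIoc_subset_uIcc ht
          rw [Set.uIcc_of_le (by linarith [hgpos x, hFx])] at h2
          rw [abs_le]
          constructor
          · linarith [h2.1]
          · have := h2.2
            have := hgu x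
            nlinarith [hgu x, hFx]
        have hsin : |Real.sin (2*π*t) - Real.sin (2*π*x)| ≤ 2 * π * |t - x| := by
          rw [Real.sin_sub_sin, abs_mul, abs_mul]
          have h1 : |Real.sin ((2*π*t - 2*π*x)/2)| ≤ π * |t - x| := by
            calc |Real.sin ((2*π*t - 2*π*x)/2)| ≤ |(2*π*t - 2*π*x)/2| := Real.abs_sin_le_abs
              _ = π * |t - x| := by
                  rw [show (2*π*t - 2*π*x)/2 = π*(t-x) by ring, abs_mul, abs_of_pos Real.pi_pos]
          have h2 : |Real.cos ((2*π*t + 2*π*x)/2)| ≤ 1 := Real.abs_cos_le_one _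
          have h0 : |(2:ℝ)| = 2 := by norm_num
          rw [h0]
          nlinarith [abs_nonneg (Real.sin ((2*π*t - 2*π*x)/2)),
            abs_nonneg (Real.cos ((2*π*t + 2*π*x)/2)), Real.pi_pos, abs_nonneg (t-x)]
        have hg_diff : |g x - g t| ≤ 2 * π * |b| * M := by
          have : g x - g t = b * (Real.sin (2*π*x) - Real.sin (2*π*t)) := by
            simp [hgdef]; ring
          rw [this, abs_mul, abs_sub_comm]
          calc |b| * |Real.sin (2*π*t) - Real.sin (2*π*x)| ≤ |b| * (2*π*|t-x|) :=
                mul_le_mul_of_nonneg_left hsin (abs_nonneg b)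
            _ ≤ |b| * (2*π*M) := by
                apply mul_le_mul_of_nonneg_left _ (abs_nonneg b)
                apply mul_le_mul_of_nonneg_left htx (by positivity)
            _ = 2 * π * |b| * M := by ring
        rw [Real.norm_eq_abs]
        rw [inv_sub_inv (hgpos t).ne' (hgpos x).ne']
        rw [abs_div]
        have hprod : m^2 ≤ |g t * g x| := by
          rw [abs_of_pos (mul_pos (hgpos t) (hgpos x))]
          calc m^2 = m * m := sq m
            _ ≤ g t * g x := mul_le_mul (hgl t) (hgl x) hm.le (hgpos t).le
        apply div_le_div₀ (by positivity) hg_diff (by positivity)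
        exact hprod
      calc |∫ t in x..(F x), ((g t)⁻¹ - (g x)⁻¹)| ≤ (2 * π * |b| * M / m ^ 2) * |F x - x| :=
            intervalIntegral.norm_integral_le_of_norm_le_const h1
        _ ≤ (2 * π * |b| * M / m ^ 2) * M := by
            apply mul_le_mul_of_nonneg_left _ (by positivity)
            rw [hFx, abs_of_pos (hgpos x)]
            exact hgu x
    rw [hdiff]
    calc |c * (∫ t in x..(F x), (g t)⁻¹) - c| = c * |∫ t in x..(F x), ((g t)⁻¹ - (g x)⁻¹)| := by
          rw [hsplit]
          rw [show c * ((∫ t in x..F x, ((g t)⁻¹ - (g x)⁻¹)) + 1) - c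
            = c * (∫ t in x..F x, ((g t)⁻¹ - (g x)⁻¹)) by ring]
          rw [abs_mul, abs_of_pos hc]
      _ ≤ c * ((2 * π * |b| * M / m ^ 2) * M) := mul_le_mul_of_nonneg_left hbnd hc.le
      _ = c * E := by rw [hEdef]; ring
  -- bound on H - id
  set B := c/m + 1 with hBdef
  have hφper : Function.Periodic (fun y => H y - y) 1 := by
    intro y
    simp only [hH1 y]
    ring
  have hHid : ∀ y, |H y - y| ≤ B := by
    have h01 : ∀ z : ℝ, 0 ≤ z → z ≤ 1 → |H z - z| ≤ B := by
      intro z hz0 hz1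
      have hHz : |H z| ≤ c/m := by
        simp only [hHdef]
        rw [abs_mul, abs_of_pos hc]
        have hb1 : ∀ t ∈ Set.uIoc (0:ℝ) z, ‖(g t)⁻¹‖ ≤ 1/m := by
          intro t _
          rw [Real.norm_eq_abs, abs_of_pos (inv_pos.2 (hgpos t))]
          rw [one_div]
          exact inv_anti₀ hm (hgl t)
        have h2 := intervalIntegral.norm_integral_le_of_norm_le_const hb1
        rw [Real.norm_eq_abs] at h2
        calc c * |∫ t in (0:ℝ)..z, (g t)⁻¹| ≤ c * (1/m * |z - 0|) :=
              mul_le_mul_of_nonneg_left h2 hc.le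
          _ ≤ c * (1/m * 1) := by
              apply mul_le_mul_of_nonneg_left _ hc.le
              apply mul_le_mul_of_nonneg_left _ (by positivity)
              rw [sub_zero, abs_of_nonneg hz0]
              exact hz1
          _ = c/m := by ring
      calc |H z - z| ≤ |H z| + |z| := abs_sub _ _
        _ ≤ c/m + 1 := add_le_add hHz (by rw [abs_of_nonneg hz0]; exact hz1)
    intro y
    have h := hφper.sub_zsmul_eq (⌊y⌋) (x := y)
    simp only [zsmul_eq_mul, mul_one] at h
    have hfr : H y - y = H (Int.fract y) - Int.fract y := by
      rw [Int.fract]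
      exact h.symm
    rw [hfr]
    exact h01 _ (Int.fract_nonneg y) (Int.fract_lt_one y).le
  have hH0 : H 0 = 0 := by simp [hHdef]
  have hiter : ∀ n : ℕ, |H (F^[n] 0) - n * c| ≤ n * (c * E) := by
    intro n
    induction n with
    | zero => simp [hH0]
    | succ n ih =>
      rw [Function.iterate_succ_apply']
      have h1 := hkey (F^[n] 0)
      push_cast
      calc |H (F (F^[n] 0)) - (↑n+1) * c|
          = |(H (F (F^[n] 0)) - H (F^[n] 0) - c) + (H (F^[n] 0) - ↑n * c)| := by
            congr 1
            ring
        _ ≤ |H (F (F^[n] 0)) - H (F^[n] 0) - c| + |H (F^[n] 0) - ↑n * c| := abs_add_le _ _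
        _ ≤ c*E + ↑n*(c*E) := add_le_add h1 ih
        _ = (↑n+1)*(c*E) := by ring
  have hFn : ∀ n : ℕ, |F^[n] 0 - n * c| ≤ n * (c*E) + B := by
    intro n
    have h1 := hiter n
    have h2 := hHid (F^[n] 0)
    calc |F^[n] 0 - ↑n*c| = |(H (F^[n] 0) - ↑n*c) - (H (F^[n] 0) - F^[n] 0)| := by
          congr 1
          ring
      _ ≤ |H (F^[n] 0) - ↑n*c| + |H (F^[n] 0) - F^[n] 0| := abs_sub _ _
      _ ≤ ↑n*(c*E) + B := add_le_add h1 h2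
  have hBtend : Tendsto (fun n : ℕ => B / (n:ℝ)) atTop (nhds 0) :=
    tendsto_const_div_atTop_nhds_zero_nat B
  have tlim : Tendsto (fun n : ℕ => c + c*E + B/(n:ℝ)) atTop (nhds (c + c*E)) := by
    simpa using ((tendsto_const_nhds : Tendsto (fun _ : ℕ => c + c*E) atTop (nhds (c + c*E)))).add hBtend
  have tlim2 : Tendsto (fun n : ℕ => c - c*E - B/(n:ℝ)) atTop (nhds (c - c*E)) := by
    simpa using ((tendsto_const_nhds : Tendsto (fun _ : ℕ => c - c*E) atTop (nhds (c - c*E)))).sub hBtend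
  have upper : r ≤ c + c*E := by
    apply le_of_tendsto_of_tendsto hr tlim
    filter_upwards [eventually_ge_atTop 1] with n hn
    have hn' : (0:ℝ) < n := by exact_mod_cast hn
    have h2 := (abs_le.1 (hFn n)).2
    show F^[n] 0 / ↑n ≤ c + c*E + B/↑n
    rw [div_le_iff₀ hn']
    have h3 : (c + c*E + B/↑n)*↑n = ↑n*c + (↑n*(c*E) + B) := by
      field_simp
      ring
    rw [h3]
    linarith
  have lower : c - c*E ≤ r := by
    apply le_of_tendsto_of_tendsto tlim2 hr
    filter_upwards [eventually_ge_atTop 1] with n hn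
    have hn' : (0:ℝ) < n := by exact_mod_cast hn
    have h2 := (abs_le.1 (hFn n)).1
    show c - c*E - B/↑n ≤ F^[n] 0 / ↑n
    rw [le_div_iff₀ hn']
    have h3 : (c - c*E - B/↑n)*↑n = ↑n*c - (↑n*(c*E) + B) := by
      field_simp
      ring
    rw [h3]
    linarith
  have : |r - c| ≤ c * E := abs_le.2 ⟨by linarith, by linarith⟩
  exact this

lemma rotnum_neg {F : ℝ → ℝ} {r : ℝ} (h : HasRotNum F r) :
    HasRotNum (fun x => -F (-x)) (-r) := by
  have hit : ∀ n : ℕ, (fun x => -F (-x))^[n] 0 = -(F^[n] 0) := by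
    intro n
    induction n with
    | zero => simp
    | succ n ih =>
      rw [Function.iterate_succ_apply', ih, Function.iterate_succ_apply']
      simp
  unfold HasRotNum at *
  have heq : (fun n : ℕ => (fun x => -F (-x))^[n] 0 / n) = fun n : ℕ => -(F^[n] 0 / n) := by
    funext n
    rw [hit n]
    ring
  rw [heq]
  exact h.neg

lemma reflect_eq (a b : ℝ) :
    (fun x : ℝ => -((fun y : ℝ => y + a + b * Real.sin (2*π*y)) (-x)))
      = fun x : ℝ => x + (-a) + b * Real.sin (2*π*x) := by
  funext x
  simp only
  rw [show 2*π*(-x) = -(2*π*x) by ring, Real.sin_neg]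
  ring

lemma rot_bound_neg (a b r : ℝ) (hb : |b| < -a)
    (hr : HasRotNum (fun x => x + a + b * Real.sin (2*π*x)) r) :
    |(-r) - Real.sqrt ((-a)^2-b^2)| ≤
      Real.sqrt ((-a)^2-b^2) * (2 * π * |b| * ((-a) + |b|) ^ 2 / ((-a) - |b|) ^ 2) := by
  apply rot_bound_s8 (-a) b (-r) hb
  have h2 := rotnum_neg hr
  rwa [reflect_eq] at h2

theorem main_pos (α β ρ : ℝ → ℝ) (a' b' : ℝ)
    (hA : HasDerivAt α a' 0) (hB : HasDerivAt β b' 0)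
    (hα0 : α 0 = 0) (hβ0 : β 0 = 0)
    (hslope : |b'| < a')
    (ε : ℝ) (hε : 0 < ε)
    (hρ : ∀ μ : ℝ, |μ| < ε →
      HasRotNum (fun x => x + α μ + β μ * Real.sin (2 * π * x)) (ρ μ)) :
    HasDerivAt ρ (Real.sqrt (a' ^ 2 - b' ^ 2)) 0 := by
  have ha' : 0 < a' := (abs_nonneg b').trans_lt hslope
  -- ρ 0 = 0
  have hρ0 : ρ 0 = 0 := by
    have h0 := hρ 0 (by simpa using hε)
    have hid : (fun x : ℝ => x + α 0 + β 0 * Real.sin (2 * π * x)) = id := by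
      funext x
      simp [hα0, hβ0]
    rw [hid] at h0
    have : Filter.Tendsto (fun n : ℕ => (id : ℝ → ℝ)^[n] 0 / n) atTop (nhds 0) := by
      simp only [Function.iterate_id, id_eq, zero_div]
      exact tendsto_const_nhds
    exact tendsto_nhds_unique h0 this
  set u : ℝ → ℝ := fun μ => α μ / μ with hudef
  set v : ℝ → ℝ := fun μ => β μ / μ with hvdef
  set S : ℝ → ℝ := fun μ => Real.sqrt ((u μ)^2 - (v μ)^2) with hSdef
  set W : ℝ → ℝ := fun μ => S μ * (2*π*|β μ| * (u μ + |v μ|)^2 / (u μ - |v μ|)^2) with hWdef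
  -- tendsto of u, v
  have hu : Tendsto u (nhdsWithin 0 {(0:ℝ)}ᶜ) (nhds a') := by
    have := hasDerivAt_iff_tendsto_slope.1 hA
    apply this.congr
    intro μ
    simp [slope_def_field, hα0, hudef, div_eq_inv_mul]
  have hv : Tendsto v (nhdsWithin 0 {(0:ℝ)}ᶜ) (nhds b') := by
    have := hasDerivAt_iff_tendsto_slope.1 hB
    apply this.congr
    intro μ
    simp [slope_def_field, hβ0, hvdef, div_eq_inv_mul]
  set τ := (a' + |b'|)/2 with hτdef
  have hτ1 : |b'| < τ := by simp [hτdef]; linarith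
  have hτ2 : τ < a' := by simp [hτdef]; linarith
  -- eventual bounds
  have hev1 : ∀ᶠ μ in nhdsWithin 0 {(0:ℝ)}ᶜ, τ < u μ :=
    hu (Ioi_mem_nhds hτ2)
  have hev2 : ∀ᶠ μ in nhdsWithin 0 {(0:ℝ)}ᶜ, |v μ| < τ := by
    have habs : Tendsto (fun μ => |v μ|) (nhdsWithin 0 {(0:ℝ)}ᶜ) (nhds |b'|) :=
      (continuous_abs.tendsto b').comp hv
    exact habs (Iio_mem_nhds hτ1)
  have hev3 : ∀ᶠ μ in nhdsWithin 0 {(0:ℝ)}ᶜ, |μ| < ε := by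
    have : ∀ᶠ μ in nhds (0:ℝ), |μ| < ε := by
      have : Continuous (fun μ : ℝ => |μ|) := continuous_abs
      have h' : Set.Iio ε ∈ nhds |(0:ℝ)| := by simpa using Iio_mem_nhds hε
      exact (this.tendsto 0) h'
    exact this.filter_mono nhdsWithin_le_nhds
  have hevne : ∀ᶠ μ in nhdsWithin 0 {(0:ℝ)}ᶜ, μ ≠ 0 := by
    filter_upwards [self_mem_nhdsWithin] with μ hμ
    exact hμ
  -- the key bound
  have hkey : ∀ᶠ μ in nhdsWithin 0 {(0:ℝ)}ᶜ, |ρ μ - μ * S μ| ≤ |μ| * W μ := by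
    filter_upwards [hev1, hev2, hev3, hevne] with μ h1 h2 h3 h4
    have hupos : 0 < u μ := lt_trans (lt_of_le_of_lt (abs_nonneg b') hτ1) h1
    have huv : |v μ| < u μ := h2.trans h1
    have hune : u μ - |v μ| ≠ 0 := ne_of_gt (by linarith)
    have hαμ : α μ = u μ * μ := by
      simp only [hudef]
      field_simp
    have hβμ : β μ = v μ * μ := by
      simp only [hvdef]
      field_simp
    have hX : 0 ≤ (u μ)^2 - (v μ)^2 := by
      nlinarith [abs_nonneg (v μ), sq_abs (v μ)]
    have hS2 : (α μ)^2 - (β μ)^2 = ((u μ)^2 - (v μ)^2) * μ^2 := by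
      rw [hαμ, hβμ]
      ring
    have hsqrt : Real.sqrt ((α μ)^2 - (β μ)^2) = S μ * |μ| := by
      rw [hS2, Real.sqrt_mul hX, Real.sqrt_sq_eq_abs, hSdef]
    rcases h4.lt_or_gt with hneg | hpos
    · -- μ < 0
      have hmpos : 0 < -μ := by linarith
      have habsb : |β μ| = |v μ| * (-μ) := by
        rw [hβμ, abs_mul, abs_of_neg hneg]
      have hab : |β μ| < -(α μ) := by
        rw [habsb, hαμ, show -(u μ * μ) = u μ * (-μ) by ring]
        exact mul_lt_mul_of_pos_right huv hmpos
      have hR := rot_bound_neg (α μ) (β μ) (ρ μ) hab (hρ μ h3)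
      rw [neg_sq] at hR
      have e1 : -(α μ) + |β μ| = (u μ + |v μ|) * (-μ) := by
        rw [habsb, hαμ]
        ring
      have e2 : -(α μ) - |β μ| = (u μ - |v μ|) * (-μ) := by
        rw [habsb, hαμ]
        ring
      have hLHS : |(-(ρ μ)) - Real.sqrt ((α μ)^2 - (β μ)^2)| = |ρ μ - μ * S μ| := by
        rw [hsqrt, abs_of_neg hneg]
        rw [show -ρ μ - S μ * -μ = -(ρ μ - μ * S μ) by ring, abs_neg]
      have hRHS : Real.sqrt ((α μ)^2 - (β μ)^2) *
          (2 * π * |β μ| * (-(α μ) + |β μ|) ^ 2 / (-(α μ) - |β μ|) ^ 2) = |μ| * W μ := by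
        rw [hsqrt, e1, e2, abs_of_neg hneg, hWdef]
        simp only
        rw [mul_pow, mul_pow]
        field_simp
      rw [hLHS, hRHS] at hR
      exact hR
    · -- 0 < μ
      have habsb : |β μ| = |v μ| * μ := by
        rw [hβμ, abs_mul, abs_of_pos hpos]
      have hab : |β μ| < α μ := by
        rw [habsb, hαμ]
        exact mul_lt_mul_of_pos_right huv hpos
      have hR := rot_bound_s8 (α μ) (β μ) (ρ μ) hab (hρ μ h3)
      have e1 : α μ + |β μ| = (u μ + |v μ|) * μ := by
        rw [habsb, hαμ]
        ring
      have e2 : α μ - |β μ| = (u μ - |v μ|) * μ := by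
        rw [habsb, hαμ]
        ring
      have hLHS : |ρ μ - Real.sqrt ((α μ)^2 - (β μ)^2)| = |ρ μ - μ * S μ| := by
        rw [hsqrt, abs_of_pos hpos]
        ring_nf
      have hRHS : Real.sqrt ((α μ)^2 - (β μ)^2) *
          (2 * π * |β μ| * (α μ + |β μ|) ^ 2 / (α μ - |β μ|) ^ 2) = |μ| * W μ := by
        rw [hsqrt, e1, e2, abs_of_pos hpos, hWdef]
        simp only
        rw [mul_pow, mul_pow]
        field_simp
      rw [hLHS, hRHS] at hR
      exact hR
  -- slope bound
  have hslopebd : ∀ᶠ μ in nhdsWithin 0 {(0:ℝ)}ᶜ, |slope ρ 0 μ - S μ| ≤ W μ := by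
    filter_upwards [hkey, hevne] with μ h1 h2
    have hμ : (0:ℝ) < |μ| := abs_pos.2 h2
    have hsl : slope ρ 0 μ = ρ μ / μ := by
      rw [slope_def_field, hρ0]
      simp
    rw [hsl]
    rw [show ρ μ / μ - S μ = (ρ μ - μ * S μ)/μ from by field_simp]
    rw [abs_div]
    rw [div_le_iff₀ hμ]
    linarith [h1]
  -- limits
  have hST : Tendsto S (nhdsWithin 0 {(0:ℝ)}ᶜ) (nhds (Real.sqrt (a'^2 - b'^2))) := by
    apply (Real.continuous_sqrt.tendsto _).comp
    exact (hu.pow 2).sub (hv.pow 2)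
  have hβT : Tendsto (fun μ => |β μ|) (nhdsWithin 0 {(0:ℝ)}ᶜ) (nhds 0) := by
    have hc : Tendsto β (nhds 0) (nhds (β 0)) := hB.continuousAt.tendsto
    rw [hβ0] at hc
    have h2 : Tendsto β (nhdsWithin 0 {(0:ℝ)}ᶜ) (nhds 0) := hc.mono_left nhdsWithin_le_nhds
    have := (continuous_abs.tendsto (0:ℝ)).comp h2
    simpa [Function.comp_def] using this
  have habsvT : Tendsto (fun μ => |v μ|) (nhdsWithin 0 {(0:ℝ)}ᶜ) (nhds |b'|) :=
    (continuous_abs.tendsto b').comp hv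
  have hWT : Tendsto W (nhdsWithin 0 {(0:ℝ)}ᶜ) (nhds 0) := by
    have hnum : Tendsto (fun μ => 2*π*|β μ| * (u μ + |v μ|)^2)
        (nhdsWithin 0 {(0:ℝ)}ᶜ) (nhds (2*π*0 * (a' + |b'|)^2)) :=
      ((tendsto_const_nhds.mul hβT).mul ((hu.add habsvT).pow 2))
    have hden : Tendsto (fun μ => (u μ - |v μ|)^2)
        (nhdsWithin 0 {(0:ℝ)}ᶜ) (nhds ((a' - |b'|)^2)) :=
      (hu.sub habsvT).pow 2
    have hdenne : ((a' - |b'|)^2 : ℝ) ≠ 0 := by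
      have : 0 < a' - |b'| := by linarith
      positivity
    have hquot := hnum.div hden hdenne
    have := hST.mul hquot
    simpa using this
  -- squeeze
  rw [hasDerivAt_iff_tendsto_slope]
  have hlowT : Tendsto (fun μ => S μ - W μ) (nhdsWithin 0 {(0:ℝ)}ᶜ)
      (nhds (Real.sqrt (a'^2 - b'^2))) := by
    have := hST.sub hWT
    simpa using this
  have hupT : Tendsto (fun μ => S μ + W μ) (nhdsWithin 0 {(0:ℝ)}ᶜ)
      (nhds (Real.sqrt (a'^2 - b'^2))) := by
    have := hST.add hWT
    simpa using this
  apply tendsto_of_tendsto_of_tendsto_of_le_of_le' hlowT hupT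
  · filter_upwards [hslopebd] with μ h
    linarith [(abs_le.1 h).1]
  · filter_upwards [hslopebd] with μ h
    linarith [(abs_le.1 h).2]


end ArnoldAux

theorem arnold_map_rotation_number_differentiable_at_origin
    (α β : ℝ → ℝ) (hα : ContDiff ℝ 1 α) (hβ : ContDiff ℝ 1 β)
    (hα0 : α 0 = 0) (hβ0 : β 0 = 0)
    (hslope : |deriv β 0| < |deriv α 0|)
    (ε : ℝ) (hε : 0 < ε)
    (hβsmall : ∀ μ : ℝ, |μ| < ε → |β μ| < 1 / (2 * π))
    (ρ : ℝ → ℝ)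
    (hρ : ∀ μ : ℝ, |μ| < ε →
      HasRotNum (fun x => x + α μ + β μ * Real.sin (2 * π * x)) (ρ μ)) :
    HasDerivAt ρ (Real.sign (deriv α 0) *
      Real.sqrt ((deriv α 0) ^ 2 - (deriv β 0) ^ 2)) 0 := by
  have hA : HasDerivAt α (deriv α 0) 0 :=
    ((hα.differentiable one_ne_zero) 0).hasDerivAt
  have hB : HasDerivAt β (deriv β 0) 0 :=
    ((hβ.differentiable one_ne_zero) 0).hasDerivAt
  have hane : deriv α 0 ≠ 0 := by
    intro h
    rw [h] at hslope
    simp only [abs_zero] at hslope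
    linarith [abs_nonneg (deriv β 0)]
  rcases hane.lt_or_gt with hneg | hpos
  · have hsl : |deriv β 0| < -(deriv α 0) := by rwa [abs_of_neg hneg] at hslope
    have hρ' : ∀ μ : ℝ, |μ| < ε →
        HasRotNum (fun x => x + (-(α μ)) + β μ * Real.sin (2*π*x)) (-(ρ μ)) := by
      intro μ hμ
      have h2 := rotnum_neg (hρ μ hμ)
      rwa [reflect_eq] at h2
    have hmain := main_pos (fun μ => -(α μ)) β (fun μ => -(ρ μ)) (-(deriv α 0)) (deriv β 0)
      hA.neg hB (by simp [hα0]) hβ0 hsl ε hε hρ'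
    have h3 : HasDerivAt ρ (-(Real.sqrt ((-(deriv α 0))^2 - (deriv β 0)^2))) 0 := by
      simpa [Pi.neg_def] using hmain.neg
    rw [Real.sign_of_neg hneg]
    rw [show (-1 : ℝ) * Real.sqrt ((deriv α 0)^2 - (deriv β 0)^2)
      = -(Real.sqrt ((-(deriv α 0))^2 - (deriv β 0)^2)) from by rw [neg_sq]; ring]
    exact h3
  · rw [Real.sign_of_pos hpos, one_mul]
    exact main_pos α β ρ _ _ hA hB hα0 hβ0 (by rwa [abs_of_pos hpos] at hslope) ε hε hρ
end
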